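/- arXiv:2311.04237 — 4 statements merged into one kernel-verified Lean document; each statement's English description precedes it below -/
import Mathlib

section
/- Let A, B, C be d×d Hermitian matrices with A positive semi-definite and B positive definite. If ⟨v, Av⟩·⟨v, Bv⟩ ≥ ⟨v, Cv⟩² for all v ∈ ℂ^d, then tr(AB⁻¹) ≥ tr(B⁻¹CB⁻¹C). -/
open Matrix
open scoped ComplexOrder

private lemma conj_dot {d : ℕ} (T M : Matrix (Fin d) (Fin d) ℂ) (hT : T.IsHermitian)
    (u : Fin d → ℂ) :
    star (T *ᵥ u) ⬝ᵥ M *ᵥ (T *ᵥ u) = star u ⬝ᵥ (T * M * T) *ᵥ u := by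
  rw [star_mulVec, hT.eq, mulVec_mulVec, ← dotProduct_mulVec, mulVec_mulVec, ← mul_assoc]

private lemma diag_entry {d : ℕ} (U M : Matrix (Fin d) (Fin d) ℂ) (i : Fin d) :
    (star U * M * U) i i = star (fun j => U j i) ⬝ᵥ M *ᵥ (fun j => U j i) := by
  simp only [mul_apply, mulVec, dotProduct, star_apply, conjTranspose_apply, Pi.star_apply,
    Matrix.star_apply, Finset.mul_sum, Finset.sum_mul]
  rw [Finset.sum_comm]
  congr 1; ext j; congr 1; ext k; ring

/-- Let `A, B, C` be `d × d` Hermitian matrices with `A` positive semi-definite and `B`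
positive definite. If `⟨v, Av⟩ ⟨v, Bv⟩ ≥ ⟨v, Cv⟩²` for all `v ∈ ℂᵈ`, then
`tr(AB⁻¹) ≥ tr(B⁻¹CB⁻¹C)`. -/
theorem trace_ineq {d : ℕ} (A B C : Matrix (Fin d) (Fin d) ℂ)
    (hA : A.PosSemidef) (hB : B.PosDef) (hC : C.IsHermitian)
    (h : ∀ v : Fin d → ℂ,
      (star v ⬝ᵥ A.mulVec v).re * (star v ⬝ᵥ B.mulVec v).re ≥ ((star v ⬝ᵥ C.mulVec v).re) ^ 2) :
    (Matrix.trace (B⁻¹ * C * B⁻¹ * C)).re ≤ (Matrix.trace (A * B⁻¹)).re := by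
  open scoped MatrixOrder in
  set S := CFC.sqrt B with hSdef
  have hSS : S * S = B := by
    open scoped MatrixOrder in
    exact CFC.sqrt_mul_sqrt_self B hB.posSemidef.nonneg
  have hSH : S.IsHermitian := by
    open scoped MatrixOrder in
    exact (CFC.sqrt_nonneg B).posSemidef.1
  have hdetS : IsUnit S.det := by
    have : S.det * S.det = B.det := by rw [← det_mul, hSS]
    have hBdet : B.det ≠ 0 := hB.det_pos.ne'
    have := mul_ne_zero_iff.mp (this ▸ hBdet)
    exact this.1.isUnit
  set T := S⁻¹ with hTdef
  have hTS : T * S = 1 := nonsing_inv_mul S hdetS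
  have hST : S * T = 1 := mul_nonsing_inv S hdetS
  have hTH : T.IsHermitian := by
    have := conjTranspose_nonsing_inv S
    rw [hSH.eq] at this
    exact this
  have hBinv : B⁻¹ = T * T := by rw [← hSS, Matrix.mul_inv_rev]
  have hTBT : T * B * T = 1 := by
    rw [← hSS, ← mul_assoc, mul_assoc T S S, ← mul_assoc T S, hTS, one_mul, hST]
  -- conjugated matrices
  set A' := T * A * T with hA'def
  set C' := T * C * T with hC'def
  have hC'H : C'.IsHermitian := by
    have : C'ᴴ = C' := by
      simp [hC'def, conjTranspose_mul, hTH.eq, hC.eq, mul_assoc]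
    exact this
  -- trace identities
  have trA : Matrix.trace (A * B⁻¹) = Matrix.trace A' := by
    rw [hBinv, hA'def, ← mul_assoc, trace_mul_cycle]
  have trC : Matrix.trace (B⁻¹ * C * B⁻¹ * C) = Matrix.trace (C' * C') := by
    rw [hBinv, hC'def]
    rw [show T * T * C * (T * T) * C = T * (T * C * T * (T * C)) by
        simp only [mul_assoc],
      trace_mul_comm, show T * C * T * (T * C) * T = T * C * T * (T * C * T) by
        simp only [mul_assoc]]
  set U : Matrix (Fin d) (Fin d) ℂ := (hC'H.eigenvectorUnitary : Matrix (Fin d) (Fin d) ℂ) with hUdef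
  have hUU : star U * U = 1 := (Matrix.mem_unitaryGroup_iff').mp hC'H.eigenvectorUnitary.2
  have hUU' : U * star U = 1 := (Matrix.mem_unitaryGroup_iff).mp hC'H.eigenvectorUnitary.2
  set lam := hC'H.eigenvalues with hlam
  have hdiag : star U * C' * U = diagonal (RCLike.ofReal ∘ lam) :=
    by have := hC'H.conjStarAlgAut_star_eigenvectorUnitary
       rwa [Unitary.conjStarAlgAut_star_apply] at this
  -- columns of U
  set u : Fin d → Fin d → ℂ := fun i j => U j i with hu
  have hunit : ∀ i, star (u i) ⬝ᵥ u i = 1 := by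
    intro i
    have : (star U * U) i i = star (u i) ⬝ᵥ (1 : Matrix (Fin d) (Fin d) ℂ) *ᵥ u i := by
      have := diag_entry U 1 i
      rwa [mul_one] at this
    rw [one_mulVec] at this
    rw [← this, hUU, one_apply_eq]
  -- eigen entries
  have hCentry : ∀ i, star (u i) ⬝ᵥ C' *ᵥ u i = (lam i : ℂ) := by
    intro i
    rw [← diag_entry, hdiag, diagonal_apply_eq, Function.comp_apply]
    rfl
  -- per-index inequality
  have key : ∀ i, (lam i) ^ 2 ≤ (star (u i) ⬝ᵥ A' *ᵥ u i).re := by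
    intro i
    have hv := h (T *ᵥ u i)
    rw [conj_dot T A hTH, conj_dot T B hTH, conj_dot T C hTH, hTBT] at hv
    rw [one_mulVec, hunit i] at hv
    simp only [← hA'def, ← hC'def, hCentry i] at hv
    simpa using hv
  -- trace of A' as sum
  have trA'_eq : (Matrix.trace A').re = ∑ i, (star (u i) ⬝ᵥ A' *ᵥ u i).re := by
    have e : Matrix.trace (star U * A' * U) = Matrix.trace A' := by
      rw [trace_mul_cycle, hUU', one_mul]
    rw [← e, Matrix.trace]
    rw [Complex.re_sum]
    exact Finset.sum_congr rfl fun i _ => by rw [diag_apply, diag_entry]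
  -- trace of C'*C' as sum of squares
  have trC'_eq : (Matrix.trace (C' * C')).re = ∑ i, (lam i) ^ 2 := by
    have h1 : Matrix.trace (C' * C') = Matrix.trace (star U * (C' * C') * U) := by
      have e : Matrix.trace (star U * (C' * C') * U) = Matrix.trace (C' * C') := by
        rw [trace_mul_cycle, hUU', one_mul]
      exact e.symm
    have h2 : star U * (C' * C') * U
        = (star U * C' * U) * (star U * C' * U) := by
      rw [show star U * C' * U * (star U * C' * U)
          = star U * (C' * (U * star U) * C') * U by simp only [mul_assoc], hUU']
      simp only [mul_one]
    rw [h1, h2, hdiag, diagonal_mul_diagonal, trace_diagonal, Complex.re_sum]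
    refine Finset.sum_congr rfl fun i _ => ?_
    simp [sq]
  rw [trA, trC, trA'_eq, trC'_eq]
  exact Finset.sum_le_sum fun i _ => key i
end

section
/- Let φ₁, φ₂ : H → ℝ be VB-convex functions on a real Hilbert space H, and let α, β > 0. Then αφ₁ + βφ₂ is VB-convex. -/
open Set Filter Topology

section Aux

variable {H : Type*} [NormedAddCommGroup H] [InnerProductSpace ℝ H]

/-- A monotone function has nonnegative derivative. -/
lemma VB.nonneg_of_monotone_hasDerivAt {f : ℝ → ℝ} {d t : ℝ} (hm : Monotone f)
    (hd : HasDerivAt f d t) : 0 ≤ d := by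
  have h := hasDerivAt_iff_tendsto_slope.mp hd
  refine ge_of_tendsto h ?_
  filter_upwards [self_mem_nhdsWithin] with y hy
  have hy' : y ≠ t := hy
  simp only [slope, vsub_eq_sub, smul_eq_mul]
  rcases lt_or_gt_of_ne hy' with h1 | h1
  · have h2 : f y ≤ f t := hm h1.le
    have h3 : y - t < 0 := by linarith
    have := mul_nonneg (neg_nonneg.2 (inv_nonpos.2 h3.le)) (by linarith : 0 ≤ f t - f y)
    nlinarith
  · have h2 : f t ≤ f y := hm h1.le
    have h3 : (0:ℝ) < y - t := by linarith
    exact mul_nonneg (inv_nonneg.2 h3.le) (by linarith)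

lemma VB.line_hasDerivAt (x v : H) (t : ℝ) :
    HasDerivAt (fun s : ℝ => x + s • v) v t := by
  simpa using ((hasDerivAt_id t).smul_const v).const_add x

lemma VB.comp_line_hasDerivAt {f : H → ℝ} (hf : Differentiable ℝ f) (x v : H) (t : ℝ) :
    HasDerivAt (fun s : ℝ => f (x + s • v)) (fderiv ℝ f (x + t • v) v) t :=
  (hf _).hasFDerivAt.comp_hasDerivAt t (VB.line_hasDerivAt x v t)

lemma VB.second_line_hasDerivAt {φ : H → ℝ} (hφ : ContDiff ℝ 2 φ) (x v : H) (t : ℝ) :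
    HasDerivAt (fun s : ℝ => fderiv ℝ φ (x + s • v) v)
      (fderiv ℝ (fderiv ℝ φ) (x + t • v) v v) t := by
  have h1 : ContDiff ℝ 1 (fderiv ℝ φ) := hφ.fderiv_right (by norm_num)
  have h2 : HasFDerivAt (fderiv ℝ φ) (fderiv ℝ (fderiv ℝ φ) (x + t • v)) (x + t • v) :=
    (h1.differentiable one_ne_zero _).hasFDerivAt
  have h3 := ((ContinuousLinearMap.apply ℝ ℝ v).hasFDerivAt.comp (x + t • v) h2).comp_hasDerivAt
    t (VB.line_hasDerivAt x v t)
  simpa [Function.comp_def] using h3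

lemma VB.line_convexOn {φ : H → ℝ} (hconv : ConvexOn ℝ univ φ) (x v : H) :
    ConvexOn ℝ univ (fun s : ℝ => φ (x + s • v)) := by
  refine ⟨convex_univ, fun s _ t _ a b ha hb hab => ?_⟩
  have key : a • (x + s • v) + b • (x + t • v) = (a + b) • x + (a * s + b * t) • v := by
    module
  rw [hab, one_smul] at key
  show φ (x + (a * s + b * t) • v) ≤ a • φ (x + s • v) + b • φ (x + t • v)
  rw [← key]
  exact hconv.2 (mem_univ _) (mem_univ _) ha hb hab

/-- A `C²` convex function has nonnegative second derivative in every direction. -/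
lemma VB.second_nonneg {φ : H → ℝ} (hφ : ContDiff ℝ 2 φ) (hconv : ConvexOn ℝ univ φ)
    (x v : H) : 0 ≤ iteratedFDeriv ℝ 2 φ x ![v, v] := by
  set g : ℝ → ℝ := fun s => φ (x + s • v) with hg
  have hdiff : Differentiable ℝ φ := hφ.differentiable (by norm_num)
  have hg' : ∀ t, HasDerivAt g (fderiv ℝ φ (x + t • v) v) t :=
    fun t => VB.comp_line_hasDerivAt hdiff x v t
  have hgc : ConvexOn ℝ univ g := VB.line_convexOn hconv x v
  have hmono : Monotone (fun t : ℝ => fderiv ℝ φ (x + t • v) v) := by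
    have h : MonotoneOn (deriv g) univ :=
      hgc.monotoneOn_deriv (fun t _ => (hg' t).differentiableAt)
    have : Monotone (deriv g) := monotoneOn_univ.mp h
    intro s t hst
    have e1 := (hg' s).deriv
    have e2 := (hg' t).deriv
    dsimp only
    rw [← e1, ← e2]
    exact this hst
  have hd : HasDerivAt (fun t : ℝ => fderiv ℝ φ (x + t • v) v)
      (fderiv ℝ (fderiv ℝ φ) (x + (0:ℝ) • v) v v) 0 := VB.second_line_hasDerivAt hφ x v 0
  have := VB.nonneg_of_monotone_hasDerivAt hmono hd
  rw [iteratedFDeriv_two_apply]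
  simpa using this

/-- A nonnegative `C²` function has nonnegative second derivative at a zero. -/
lemma VB.second_nonneg_of_min {ψ : H → ℝ} (hψ : ContDiff ℝ 2 ψ) (hnn : ∀ y, 0 ≤ ψ y)
    {x : H} (hx : ψ x = 0) (u : H) : 0 ≤ iteratedFDeriv ℝ 2 ψ x ![u, u] := by
  set g : ℝ → ℝ := fun s => ψ (x + s • u) with hgdef
  set g₁ : ℝ → ℝ := fun s => fderiv ℝ ψ (x + s • u) u with hg₁def
  have hdiff : Differentiable ℝ ψ := hψ.differentiable (by norm_num)
  have hg' : ∀ t, HasDerivAt g (g₁ t) t := fun t => VB.comp_line_hasDerivAt hdiff x u t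
  have hg0 : g 0 = 0 := by simp [hgdef, hx]
  set d : ℝ := fderiv ℝ (fderiv ℝ ψ) x u u with hd_def
  have hd : HasDerivAt g₁ d 0 := by
    have := VB.second_line_hasDerivAt hψ x u 0
    simpa using this
  have hmin : IsLocalMin g 0 := Filter.Eventually.of_forall fun t => by
    rw [hg0]; exact hnn _
  have hg₁0 : g₁ 0 = 0 := by rw [← (hg' 0).deriv]; exact hmin.deriv_eq_zero
  have hdnn : 0 ≤ d := by
    by_contra hneg
    push_neg at hneg
    have hslope := hasDerivAt_iff_tendsto_slope.mp hd
    have h2 : ∀ᶠ t in 𝓝[>] (0:ℝ), slope g₁ 0 t < d / 2 := by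
      have hmono : 𝓝[>] (0:ℝ) ≤ 𝓝[≠] (0:ℝ) :=
        nhdsWithin_mono _ fun t ht => ne_of_gt ht
      exact (hslope.mono_left hmono).eventually (gt_mem_nhds (by linarith))
    have h3 : ∀ᶠ t in 𝓝[>] (0:ℝ), g₁ t < 0 := by
      filter_upwards [h2, self_mem_nhdsWithin] with t ht ht0
      have ht0' : (0:ℝ) < t := ht0
      have hs : g₁ t / t < 0 := by
        have : slope g₁ 0 t = g₁ t / t := by
          simp [slope, hg₁0, div_eq_inv_mul]
        rw [this] at ht
        linarith
      rcases div_neg_iff.mp hs with ⟨_, h⟩ | ⟨h, _⟩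
      · exact absurd ht0' (not_lt.2 h.le)
      · exact h
    obtain ⟨ε, hε, hball⟩ := (nhdsGT_basis (0:ℝ)).eventually_iff.mp h3
    have hanti : StrictAntiOn g (Icc 0 ε) := by
      refine strictAntiOn_of_deriv_neg (convex_Icc 0 ε) ?_ ?_
      · exact (hψ.continuous.comp (by continuity)).continuousOn
      · intro t ht
        rw [interior_Icc] at ht
        rw [(hg' t).deriv]
        exact hball ht
    have := hanti (left_mem_Icc.2 hε.le) (right_mem_Icc.2 hε.le) hε
    rw [hg0] at this
    exact absurd this (not_lt.2 (hnn _))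
  rw [iteratedFDeriv_two_apply]
  simpa using hdnn

lemma VB.fourth_eq (φ : H → ℝ) (x u v : H) :
    iteratedFDeriv ℝ 4 φ x ![u, u, v, v] =
      iteratedFDeriv ℝ 2 (fderiv ℝ (fderiv ℝ φ)) x ![u, u] v v := by
  have h1 : iteratedFDeriv ℝ 4 φ x ![u, u, v, v]
      = iteratedFDeriv ℝ 3 (fderiv ℝ φ) x ![u, u, v] v := by
    have h := iteratedFDeriv_succ_apply_right (𝕜 := ℝ) (f := φ) (x := x) (n := 3) ![u, u, v, v]
    rw [show Fin.init ![u, u, v, v] = ![u, u, v] from by funext i; fin_cases i <;> rfl] at h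
    exact h
  have h2 : iteratedFDeriv ℝ 3 (fderiv ℝ φ) x ![u, u, v]
      = iteratedFDeriv ℝ 2 (fderiv ℝ (fderiv ℝ φ)) x ![u, u] v := by
    have h := iteratedFDeriv_succ_apply_right (𝕜 := ℝ) (f := fderiv ℝ φ) (x := x) (n := 2)
      ![u, u, v]
    rw [show Fin.init ![u, u, v] = ![u, u] from by funext i; fin_cases i <;> rfl] at h
    exact h
  rw [h1, h2]

/-- If the second derivative of a `C⁴` convex function vanishes in direction `v` at `x`, then
the fourth derivative `D⁴φ(x)[u,u,v,v]` is nonnegative. -/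
lemma VB.fourth_nonneg {φ : H → ℝ} (hφ : ContDiff ℝ 4 φ) (hconv : ConvexOn ℝ univ φ)
    (x u v : H) (hB : iteratedFDeriv ℝ 2 φ x ![v, v] = 0) :
    0 ≤ iteratedFDeriv ℝ 4 φ x ![u, u, v, v] := by
  set G := fderiv ℝ (fderiv ℝ φ) with hGdef
  have h3 : ContDiff ℝ 3 (fderiv ℝ φ) := hφ.fderiv_right (by norm_num)
  have hG : ContDiff ℝ 2 G := h3.fderiv_right (by norm_num)
  set ev : (H →L[ℝ] (H →L[ℝ] ℝ)) →L[ℝ] ℝ :=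
    (ContinuousLinearMap.apply ℝ ℝ v).comp (ContinuousLinearMap.apply ℝ (H →L[ℝ] ℝ) v) with hev
  have hψc : ContDiff ℝ 2 (ev ∘ G) := ev.contDiff.comp hG
  have hψ_eq : ∀ y, (ev ∘ G) y = iteratedFDeriv ℝ 2 φ y ![v, v] := fun y => by
    rw [iteratedFDeriv_two_apply]
    simp [hev, hGdef]
  have hψnn : ∀ y, 0 ≤ (ev ∘ G) y := fun y =>
    (hψ_eq y) ▸ VB.second_nonneg (hφ.of_le (by norm_num)) hconv y v
  have hx0 : (ev ∘ G) x = 0 := by rw [hψ_eq]; exact hB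
  have key := VB.second_nonneg_of_min hψc hψnn hx0 u
  rw [ContinuousLinearMap.iteratedFDeriv_comp_left ev hG.contDiffAt le_rfl] at key
  rw [VB.fourth_eq]
  simpa [hev] using key

lemma VB.vb_ineq (α β A₁ B₁ C₁ A₂ B₂ C₂ : ℝ) (hα : 0 < α) (hβ : 0 < β)
    (hB₁ : 0 ≤ B₁) (hB₂ : 0 ≤ B₂)
    (h₁ : A₁ * B₁ ≥ 3 / 2 * C₁ ^ 2) (h₂ : A₂ * B₂ ≥ 3 / 2 * C₂ ^ 2)
    (hA₁ : B₁ = 0 → 0 ≤ A₁) (hA₂ : B₂ = 0 → 0 ≤ A₂) :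
    (α * A₁ + β * A₂) * (α * B₁ + β * B₂) ≥ 3 / 2 * (α * C₁ + β * C₂) ^ 2 := by
  rcases hB₁.eq_or_lt' with hB₁0 | hB₁p
  · subst hB₁0
    have hC₁ : C₁ = 0 := by nlinarith [sq_nonneg C₁]
    have hA1 := hA₁ rfl
    subst hC₁
    rcases hB₂.eq_or_lt' with hB₂0 | hB₂p
    · subst hB₂0
      have hC₂ : C₂ = 0 := by nlinarith [sq_nonneg C₂]
      subst hC₂
      simp
    · nlinarith [mul_pos hα hβ, mul_nonneg hA1 hB₂, sq_nonneg β]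
  · have hA1 : 0 ≤ A₁ := by nlinarith [sq_nonneg C₁]
    rcases hB₂.eq_or_lt' with hB₂0 | hB₂p
    · subst hB₂0
      have hC₂ : C₂ = 0 := by nlinarith [sq_nonneg C₂]
      have hA2 := hA₂ rfl
      subst hC₂
      nlinarith [mul_pos hα hβ, mul_nonneg hA2 hB₁, sq_nonneg α]
    · have hA2 : 0 ≤ A₂ := by nlinarith [sq_nonneg C₂]
      have hkey : 3 * C₁ * C₂ ≤ A₁ * B₂ + A₂ * B₁ := by
        have hBB : 0 < B₁ * B₂ := mul_pos hB₁p hB₂p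
        rw [← mul_le_mul_iff_of_pos_right hBB]
        nlinarith [sq_nonneg (C₁ * B₂ - C₂ * B₁), sq_nonneg B₁, sq_nonneg B₂, h₁, h₂,
          mul_pos hB₁p hB₂p]
      nlinarith [mul_pos hα hβ, sq_nonneg α, sq_nonneg β, h₁, h₂, hkey,
        mul_pos hα hα, mul_pos hβ hβ]

lemma VB.iter_comb {n : ℕ} {f g : H → ℝ} (hf : ContDiff ℝ n f) (hg : ContDiff ℝ n g)
    (a b : ℝ) (x : H) (m : Fin n → H) :
    iteratedFDeriv ℝ n (fun y => a * f y + b * g y) x m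
      = a * iteratedFDeriv ℝ n f x m + b * iteratedFDeriv ℝ n g x m := by
  have h1 : ContDiff ℝ n (fun y => a • f y) := hf.const_smul a
  have h2 : ContDiff ℝ n (fun y => b • g y) := hg.const_smul b
  have heq : (fun y => a * f y + b * g y)
      = fun y => (fun z => a • f z) y + (fun z => b • g z) y := rfl
  rw [heq, iteratedFDeriv_add_apply' h1.contDiffAt h2.contDiffAt]
  simp only [ContinuousMultilinearMap.add_apply]
  rw [iteratedFDeriv_const_smul_apply' hf.contDiffAt, iteratedFDeriv_const_smul_apply' hg.contDiffAt]
  simp only [ContinuousMultilinearMap.smul_apply, smul_eq_mul]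

lemma VB.strictConvexOn_smul {φ : H → ℝ} (hφ : StrictConvexOn ℝ univ φ) {a : ℝ} (ha : 0 < a) :
    StrictConvexOn ℝ univ (fun x => a * φ x) := by
  refine ⟨convex_univ, fun x hx y hy hxy p q hp hq hpq => ?_⟩
  have h := hφ.2 hx hy hxy hp hq hpq
  simp only [smul_eq_mul] at h ⊢
  nlinarith [h, ha]

end Aux

/-- A function `φ : H → ℝ` on a real Hilbert space is VB-convex if it is `C⁴`,
strictly convex, and
`D⁴φ(x)[u,u,v,v] ⬝ D²φ(x)[v,v] ≥ (3/2) (D³φ(x)[u,v,v])²` for all `x, u, v`. -/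
def VBConvex {H : Type*} [NormedAddCommGroup H] [InnerProductSpace ℝ H] (φ : H → ℝ) : Prop :=
  ContDiff ℝ 4 φ ∧ StrictConvexOn ℝ Set.univ φ ∧
    ∀ x u v : H,
      iteratedFDeriv ℝ 4 φ x ![u, u, v, v] * iteratedFDeriv ℝ 2 φ x ![v, v] ≥
        (3 / 2) * (iteratedFDeriv ℝ 3 φ x ![u, v, v]) ^ 2

/-- If `φ₁` and `φ₂` are VB-convex and `α, β > 0`, then `α φ₁ + β φ₂` is VB-convex. -/
theorem vbConvex_add {H : Type*} [NormedAddCommGroup H] [InnerProductSpace ℝ H]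
    (φ₁ φ₂ : H → ℝ) (hφ₁ : VBConvex φ₁) (hφ₂ : VBConvex φ₂)
    (α β : ℝ) (hα : 0 < α) (hβ : 0 < β) :
    VBConvex (fun x => α * φ₁ x + β * φ₂ x) := by
  obtain ⟨hc₁, hs₁, hv₁⟩ := hφ₁
  obtain ⟨hc₂, hs₂, hv₂⟩ := hφ₂
  refine ⟨?_, ?_, ?_⟩
  · exact ((hc₁.const_smul α).add (hc₂.const_smul β) : ContDiff ℝ 4 fun x => α • φ₁ x + β • φ₂ x)
  · exact (VB.strictConvexOn_smul hs₁ hα).add (VB.strictConvexOn_smul hs₂ hβ)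
  · intro x u v
    have c₁4 : ContDiff ℝ (4:ℕ) φ₁ := hc₁
    have c₂4 : ContDiff ℝ (4:ℕ) φ₂ := hc₂
    have c₁2 : ContDiff ℝ (2:ℕ) φ₁ := hc₁.of_le (by norm_num)
    have c₂2 : ContDiff ℝ (2:ℕ) φ₂ := hc₂.of_le (by norm_num)
    have c₁3 : ContDiff ℝ (3:ℕ) φ₁ := hc₁.of_le (by norm_num)
    have c₂3 : ContDiff ℝ (3:ℕ) φ₂ := hc₂.of_le (by norm_num)
    rw [VB.iter_comb c₁4 c₂4 α β x ![u, u, v, v], VB.iter_comb c₁2 c₂2 α β x ![v, v],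
      VB.iter_comb c₁3 c₂3 α β x ![u, v, v]]
    exact VB.vb_ineq α β _ _ _ _ _ _ hα hβ
      (VB.second_nonneg c₁2 hs₁.convexOn x v)
      (VB.second_nonneg c₂2 hs₂.convexOn x v)
      (hv₁ x u v) (hv₂ x u v)
      (fun h => VB.fourth_nonneg hc₁ hs₁.convexOn x u v h)
      (fun h => VB.fourth_nonneg hc₂ hs₂.convexOn x u v h)
end

section
/- The negative log-determinant function R(ρ) = −log det ρ on Hermitian positive definite d×d matrices is VB-convex: for all Hermitian U, V, D⁴R(ρ)[U,U,V,V]·D²R(ρ)[V,V] ≥ (3/2)(D³R(ρ)[U,V,V])². -/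
open Matrix
open scoped ComplexOrder

lemma tr_conjT_mul_self_re_nonneg {d : ℕ} (M : Matrix (Fin d) (Fin d) ℂ) :
    0 ≤ (Matrix.trace (Mᴴ * M)).re := by
  simp only [Matrix.trace, Matrix.diag, Matrix.mul_apply, Matrix.conjTranspose_apply,
    Complex.re_sum]
  refine Finset.sum_nonneg fun i _ => Finset.sum_nonneg fun j _ => ?_
  rw [show star (M j i) = (starRingEnd ℂ) (M j i) from rfl, ← Complex.normSq_eq_conj_mul_self]
  simpa using Complex.normSq_nonneg (M j i)

/-- The negative log-determinant `R(ρ) = -log det ρ` on Hermitian positive definite `d × d`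
matrices is VB-convex: with `D²R(ρ)[V,V] = tr(ρ⁻¹Vρ⁻¹V)`,
`D³R(ρ)[U,V,V] = -2 tr(ρ⁻¹Vρ⁻¹Vρ⁻¹U)` and
`D⁴R(ρ)[U,U,V,V] = 4 tr(ρ⁻¹Uρ⁻¹Uρ⁻¹Vρ⁻¹V) + 2 tr(ρ⁻¹Uρ⁻¹Vρ⁻¹Uρ⁻¹V)`, one has
`D⁴R(ρ)[U,U,V,V] ⬝ D²R(ρ)[V,V] ≥ (3/2) (D³R(ρ)[U,V,V])²` for all Hermitian `U, V`. -/
theorem logDet_vbConvex {d : ℕ} (ρ U V : Matrix (Fin d) (Fin d) ℂ)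
    (hρ : ρ.PosDef) (hU : U.IsHermitian) (hV : V.IsHermitian) :
    (4 * (Matrix.trace (ρ⁻¹ * U * ρ⁻¹ * U * ρ⁻¹ * V * ρ⁻¹ * V)).re +
        2 * (Matrix.trace (ρ⁻¹ * U * ρ⁻¹ * V * ρ⁻¹ * U * ρ⁻¹ * V)).re) *
      (Matrix.trace (ρ⁻¹ * V * ρ⁻¹ * V)).re ≥
    (3 / 2) * ((-2) * (Matrix.trace (ρ⁻¹ * V * ρ⁻¹ * V * ρ⁻¹ * U)).re) ^ 2 := by
  have hP : (ρ⁻¹).PosSemidef := hρ.posSemidef.inv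
  open scoped MatrixOrder in
  set S : Matrix (Fin d) (Fin d) ℂ := CFC.sqrt (ρ⁻¹) with hSdef
  have hS : S.IsHermitian := by
    open scoped MatrixOrder in exact (CFC.sqrt_nonneg _).posSemidef.isHermitian
  have hSS : S * S = ρ⁻¹ := by
    open scoped MatrixOrder in exact CFC.sqrt_mul_sqrt_self _ hP.nonneg
  set A : Matrix (Fin d) (Fin d) ℂ := S * U * S with hAdef
  set B : Matrix (Fin d) (Fin d) ℂ := S * V * S with hBdef
  have hA : Aᴴ = A := by
    simp [hAdef, Matrix.conjTranspose_mul, hS.eq, hU.eq, Matrix.mul_assoc]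
  have hB : Bᴴ = B := by
    simp [hBdef, Matrix.conjTranspose_mul, hS.eq, hV.eq, Matrix.mul_assoc]
  -- rewrite the four traces
  have h1 : Matrix.trace (ρ⁻¹ * U * ρ⁻¹ * U * ρ⁻¹ * V * ρ⁻¹ * V)
      = Matrix.trace (A * A * B * B) := by
    rw [← hSS, show S * S * U * (S * S) * U * (S * S) * V * (S * S) * V
        = S * (S * U * S * (S * U * S) * (S * V * S) * (S * V)) by
      simp only [Matrix.mul_assoc], Matrix.trace_mul_comm]
    simp only [hAdef, hBdef, Matrix.mul_assoc]
  have h2 : Matrix.trace (ρ⁻¹ * U * ρ⁻¹ * V * ρ⁻¹ * U * ρ⁻¹ * V)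
      = Matrix.trace (A * B * A * B) := by
    rw [← hSS, show S * S * U * (S * S) * V * (S * S) * U * (S * S) * V
        = S * (S * U * S * (S * V * S) * (S * U * S) * (S * V)) by
      simp only [Matrix.mul_assoc], Matrix.trace_mul_comm]
    simp only [hAdef, hBdef, Matrix.mul_assoc]
  have h3 : Matrix.trace (ρ⁻¹ * V * ρ⁻¹ * V)
      = Matrix.trace (B * B) := by
    rw [← hSS, show S * S * V * (S * S) * V = S * (S * V * S * (S * V)) by
      simp only [Matrix.mul_assoc], Matrix.trace_mul_comm]
    simp only [hBdef, Matrix.mul_assoc]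
  have h4 : Matrix.trace (ρ⁻¹ * V * ρ⁻¹ * V * ρ⁻¹ * U)
      = Matrix.trace (B * B * A) := by
    rw [← hSS, show S * S * V * (S * S) * V * (S * S) * U
        = S * (S * V * S * (S * V * S) * (S * U)) by
      simp only [Matrix.mul_assoc], Matrix.trace_mul_comm]
    simp only [hAdef, hBdef, Matrix.mul_assoc]
  rw [h1, h2, h3, h4]
  -- cyclic trace identities (complex level, right-assoc atoms)
  have c1 : Matrix.trace (B * (A * B)) = Matrix.trace (B * B * A) := by
    rw [Matrix.trace_mul_comm B (A * B)]; simp only [Matrix.mul_assoc]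
    rw [Matrix.trace_mul_comm A (B * B)]; simp only [Matrix.mul_assoc]
  have c2 : Matrix.trace (B * (B * A)) = Matrix.trace (B * B * A) := by
    simp only [Matrix.mul_assoc]
  have c3 : Matrix.trace (A * (B * B)) = Matrix.trace (B * B * A) := by
    rw [Matrix.trace_mul_comm A (B * B)]
  have c4 : Matrix.trace (A * (B * (A * B))) = Matrix.trace (A * B * A * B) := by
    simp only [Matrix.mul_assoc]
  have c5 : Matrix.trace (A * (B * (B * A))) = Matrix.trace (A * A * B * B) := by
    rw [show A * (B * (B * A)) = (A * (B * B)) * A by simp only [Matrix.mul_assoc],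
      Matrix.trace_mul_comm (A * (B * B)) A]
    simp only [Matrix.mul_assoc]
  have c6 : Matrix.trace (B * (A * (A * B))) = Matrix.trace (A * A * B * B) := by
    rw [Matrix.trace_mul_comm B (A * (A * B))]
    simp only [Matrix.mul_assoc]
  have c7 : Matrix.trace (B * (A * (B * A))) = Matrix.trace (A * B * A * B) := by
    rw [show B * (A * (B * A)) = (B * (A * B)) * A by simp only [Matrix.mul_assoc],
      Matrix.trace_mul_comm (B * (A * B)) A]
    simp only [Matrix.mul_assoc]
  set x : ℝ := (Matrix.trace (A * A * B * B)).re with hx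
  set y : ℝ := (Matrix.trace (A * B * A * B)).re with hy
  set b : ℝ := (Matrix.trace (B * B)).re with hb
  set s : ℝ := (Matrix.trace (B * B * A)).re with hs
  have r1 := congrArg Complex.re c1
  have r2 := congrArg Complex.re c2
  have r3 := congrArg Complex.re c3
  have r4 := congrArg Complex.re c4
  have r5 := congrArg Complex.re c5
  have r6 := congrArg Complex.re c6
  have r7 := congrArg Complex.re c7
  -- b ≥ 0
  have hb0 : 0 ≤ b := by
    have := tr_conjT_mul_self_re_nonneg B
    rwa [hB] at this
  -- x ≥ y : commutator trick
  have hxy : y ≤ x := by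
    have h := tr_conjT_mul_self_re_nonneg (A * B - B * A)
    have hCt : (A * B - B * A)ᴴ = B * A - A * B := by
      simp [Matrix.conjTranspose_mul, hA, hB]
    rw [hCt] at h
    simp only [Matrix.sub_mul, Matrix.mul_sub, Matrix.trace_sub, Matrix.mul_assoc,
      Complex.sub_re] at h
    linarith [h, r4, r5, r6, r7, hx, hy]
  -- Cauchy–Schwarz via discriminant, with N = A*B + B*A
  have hcs : (4 * s) ^ 2 - 4 * b * (2 * x + 2 * y) ≤ 0 := by
    have key : ∀ t : ℝ, 0 ≤ b * (t * t) + (4 * s) * t + (2 * x + 2 * y) := by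
      intro t
      have h := tr_conjT_mul_self_re_nonneg ((t : ℂ) • B + (A * B + B * A))
      have hNt : ((t : ℂ) • B + (A * B + B * A))ᴴ = (t : ℂ) • B + (A * B + B * A) := by
        simp [Matrix.conjTranspose_smul, Matrix.conjTranspose_mul, hA, hB, Complex.conj_ofReal,
          add_comm]
      rw [hNt] at h
      simp only [Matrix.add_mul, Matrix.mul_add, Matrix.smul_mul, Matrix.mul_smul,
        Matrix.trace_add, Matrix.trace_smul, smul_smul, smul_eq_mul, Matrix.mul_assoc,
        Complex.add_re, Complex.mul_re, Complex.ofReal_re, Complex.ofReal_im, zero_mul,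
        sub_zero, mul_zero] at h
      simp only [r1, r2, r3, r4, r5, r6, r7] at h
      simp only [← hx, ← hy, ← hb, ← hs] at h
      ring_nf at h ⊢
      linarith [h]
    have := discrim_le_zero key
    simpa [discrim] using this
  nlinarith [hb0, hxy, hcs, sq_nonneg s]
end

section
/- Let f be a 1-self-concordant function on a real Hilbert space, x in its domain with ∇²f(x) positive definite, and g ∈ H. If D³f(x)[u,v,w] satisfies |D³f(x)[u,v,w]| ≤ 2‖u‖_{∇²f(x)}‖v‖_{∇²f(x)}‖w‖_{∇²f(x)} for all u,v,w, then for w defined by ⟨w,u⟩ = −D³f(x)[u, ∇⁻²f(x)g, ∇⁻²f(x)g], it holds that ‖w‖_{∇⁻²f(x)} ≤ 2‖g‖²_{∇⁻²f(x)}. -/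
open Matrix

/-- Let `f` be `1`-self-concordant at `x` with positive definite Hessian `H = ∇²f(x)`,
i.e. `|D³f(x)[u,v,w]| ≤ 2 ‖u‖_H ‖v‖_H ‖w‖_H` for all `u, v, w`.  If `w` is defined by
`⟨w, u⟩ = -D³f(x)[u, H⁻¹g, H⁻¹g]` for a vector `g`, then
`‖w‖_{H⁻¹} ≤ 2 ‖g‖²_{H⁻¹}`. -/
theorem selfConcordant_dual_norm_bound {n : ℕ}
    (f : (Fin n → ℝ) → ℝ) (x : Fin n → ℝ) (hf : ContDiff ℝ 3 f)
    (H : Matrix (Fin n) (Fin n) ℝ) (hH : H.PosDef)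
    (hHf : ∀ u v, iteratedFDeriv ℝ 2 f x ![u, v] = u ⬝ᵥ H.mulVec v)
    (hsc : ∀ u v w₀ : Fin n → ℝ,
      |iteratedFDeriv ℝ 3 f x ![u, v, w₀]| ≤
        2 * Real.sqrt (u ⬝ᵥ H.mulVec u) * Real.sqrt (v ⬝ᵥ H.mulVec v) *
          Real.sqrt (w₀ ⬝ᵥ H.mulVec w₀))
    (g w : Fin n → ℝ)
    (hw : ∀ u, w ⬝ᵥ u = -iteratedFDeriv ℝ 3 f x ![u, H⁻¹.mulVec g, H⁻¹.mulVec g]) :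
    Real.sqrt (w ⬝ᵥ H⁻¹.mulVec w) ≤ 2 * (g ⬝ᵥ H⁻¹.mulVec g) := by
  have hdet : IsUnit H.det := isUnit_iff_ne_zero.mpr hH.det_pos.ne'
  have hmul : ∀ v : Fin n → ℝ, H.mulVec (H⁻¹.mulVec v) = v := by
    intro v
    rw [Matrix.mulVec_mulVec, Matrix.mul_nonsing_inv _ hdet, Matrix.one_mulVec]
  have hHinv : H⁻¹.PosSemidef := (hH.inv).posSemidef
  set A := w ⬝ᵥ H⁻¹.mulVec w with hA
  set B := g ⬝ᵥ H⁻¹.mulVec g with hB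
  have hAnn : 0 ≤ A := by simpa using hHinv.dotProduct_mulVec_nonneg w
  have hBnn : 0 ≤ B := by simpa using hHinv.dotProduct_mulVec_nonneg g
  set u := H⁻¹.mulVec w with hu
  set v := H⁻¹.mulVec g with hv
  have huu : u ⬝ᵥ H.mulVec u = A := by
    rw [hu, hmul, dotProduct_comm]
  have hvv : v ⬝ᵥ H.mulVec v = B := by
    rw [hv, hmul, dotProduct_comm]
  have key : A ≤ 2 * Real.sqrt A * B := by
    have h1 : A = -iteratedFDeriv ℝ 3 f x ![u, v, v] := by
      rw [← hw u]
    calc A ≤ |iteratedFDeriv ℝ 3 f x ![u, v, v]| := by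
            rw [h1]; exact neg_le_abs _
      _ ≤ 2 * Real.sqrt (u ⬝ᵥ H.mulVec u) * Real.sqrt (v ⬝ᵥ H.mulVec v) *
            Real.sqrt (v ⬝ᵥ H.mulVec v) := hsc u v v
      _ = 2 * Real.sqrt A * B := by
            rw [huu, hvv, mul_assoc, Real.mul_self_sqrt hBnn]
  rcases eq_or_lt_of_le hAnn with h | h
  · rw [← h, Real.sqrt_zero]
    positivity
  · have hs : 0 < Real.sqrt A := Real.sqrt_pos.mpr h
    have : Real.sqrt A * Real.sqrt A ≤ Real.sqrt A * (2 * B) := by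
      rw [Real.mul_self_sqrt hAnn]
      calc A ≤ 2 * Real.sqrt A * B := key
        _ = Real.sqrt A * (2 * B) := by ring
    exact le_of_mul_le_mul_left this hs
end
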